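/- arXiv:1709.08057 — 3 statements merged into one kernel-verified Lean document; each statement's English description precedes it below -/
import Mathlib

section
/- Let S : Fin 2 → Fin 2 → Fin 2 → Fin 2 → ℂ (components S_{α β̄ γ σ̄} of a Chern-type tensor with respect to the identity Hermitian metric on ℂ², with the first and third indices unbarred and the second and fourth barred) satisfy: (i) S α β γ σ = S γ β α σ for all indices (symmetry in the unbarred indices); (ii) S α β γ σ = S α σ γ β for all indices (symmetry in the barred indices); (iii) S β α σ γ = conj (S α β γ σ) for all indices (Hermitian symmetry); (iv) ∑_{t} S α t t σ = 0 for all α, σ (trace-freeness with respect to the identity Levi form). Then for all α, β one has ∑_{ρ,γ,σ} S α ρ γ σ · conj (S β ρ γ σ) = (1/2) · (∑_{μ,ν,κ,λ} ‖S μ ν κ λ‖²) · (if α = β then 1 else 0). (This is the identity 𝒮_{αβ̄} = S_{αρ̄γσ̄} S^{ρ̄}{}_{β̄}{}^{σ̄γ} − ½|S|² h_{αβ̄} = 0 valid in CR dimension n = 2, equation (mS) of the paper, proved by skew-symmetrising three indices in a 2-dimensional complex space.) -/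
open Finset

/-- The identity `𝒮_{αβ̄} = S_{αρ̄γσ̄} S^{ρ̄}{}_{β̄}{}^{σ̄γ} − ½|S|² h_{αβ̄} = 0` valid for a
Chern-type (CR Weyl) tensor in CR dimension `n = 2`. -/
theorem chern_tensor_identity_dim2
    (S : Fin 2 → Fin 2 → Fin 2 → Fin 2 → ℂ)
    (hsym_unbarred : ∀ α β γ σ, S α β γ σ = S γ β α σ)
    (hsym_barred : ∀ α β γ σ, S α β γ σ = S α σ γ β)
    (hherm : ∀ α β γ σ, S β α σ γ = (starRingEnd ℂ) (S α β γ σ))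
    (htrace : ∀ α σ, ∑ t, S α t t σ = 0) :
    ∀ α β : Fin 2,
      (∑ ρ, ∑ γ, ∑ σ, S α ρ γ σ * (starRingEnd ℂ) (S β ρ γ σ)) =
        (1 / 2 : ℂ) * ((∑ μ, ∑ ν, ∑ κ, ∑ lam, ((‖S μ ν κ lam‖ ^ 2 : ℝ) : ℂ))) *
          (if α = β then 1 else 0) := by
  have hn : ∀ z : ℂ, ((‖z‖ ^ 2 : ℝ) : ℂ) = z * (starRingEnd ℂ) z := by
    intro z
    rw [Complex.mul_conj]; norm_cast; rw [← Complex.sq_norm]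
  -- trace relations, expanded
  have t00 := htrace 0 0; rw [Fin.sum_univ_two] at t00
  have t01 := htrace 0 1; rw [Fin.sum_univ_two] at t01
  have t10 := htrace 1 0; rw [Fin.sum_univ_two] at t10
  have t11 := htrace 1 1; rw [Fin.sum_univ_two] at t11
  -- canonical values of all components in terms of
  -- a = S 0 0 0 0, b = S 0 0 0 1, c = S 0 0 1 0, d = S 0 1 0 1, e = S 1 0 1 0
  have h0100 : S 0 1 0 0 = S 0 0 0 1 := by rw [hsym_barred]
  have h1000 : S 1 0 0 0 = S 0 0 1 0 := by rw [hsym_unbarred]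
  have h0110 : S 0 1 1 0 = -S 0 0 0 0 := by linear_combination t00
  have h0011 : S 0 0 1 1 = -S 0 0 0 0 := by
    rw [show S 0 0 1 1 = S 0 1 1 0 from (hsym_barred 0 1 1 0).symm]; exact h0110
  have h1001 : S 1 0 0 1 = -S 0 0 0 0 := by
    rw [hsym_unbarred]; exact h0011
  have h1100 : S 1 1 0 0 = -S 0 0 0 0 := by
    rw [hsym_barred]; exact h1001
  have h1111 : S 1 1 1 1 = S 0 0 0 0 := by linear_combination t11 - h1001
  have h0111 : S 0 1 1 1 = -S 0 0 0 1 := by linear_combination t01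
  have h1101 : S 1 1 0 1 = -S 0 0 0 1 := by rw [hsym_unbarred]; exact h0111
  have h1110 : S 1 1 1 0 = -S 0 0 1 0 := by linear_combination t10 - h1000
  have h1011 : S 1 0 1 1 = -S 0 0 1 0 := by rw [hsym_barred]; exact h1110
  intro α β
  fin_cases α <;> fin_cases β <;>
    simp only [Fin.sum_univ_two, hn, ← hherm, Fin.mk_zero, Fin.mk_one, Fin.isValue,
      h0100, h1000, h0110, h0011, h1001, h1100, h1111, h0111, h1101, h1110, h1011,
      if_true, if_pos, reduceIte] <;>
    norm_num <;> ring
end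

section
/- Fix N ≥ 1 and a signature function ε : Fin N → {1, −1}. For f : ℂ^N → ℂ twice continuously differentiable in the real sense, with Wirtinger derivatives ∂_A f(x) = ½(Df(x)(e_A) − i·Df(x)(i·e_A)) and ∂_{Ā} f(x) = ½(Df(x)(e_A) + i·Df(x)(i·e_A)), Euler operators Ef(x) = ∑_A x_A·∂_A f(x) and Ēf(x) = ∑_A conj(x_A)·∂_{Ā} f(x), flat ambient Laplacian Δf = ∑_A ε_A·∂_A ∂_{Ā} f, and r(x) = ∑_A ε_A·|x_A|², one has, at every point: Δ(r·f) = r·Δf + N·f + Ef + Ēf. (This is the flat-model case of the commutator identity [Δ, r] = n + E + Ē + 2 on the ambient space of a CR manifold of dimension 2n+1, where N = n + 2.) -/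
open Finset

/-- Wirtinger derivative `∂_A f` of a function on `ℂ^N`, defined via the real Fréchet
derivative. -/
noncomputable def wder {N : ℕ} (f : (Fin N → ℂ) → ℂ) (A : Fin N) (x : Fin N → ℂ) : ℂ :=
  (1 / 2) * ((fderiv ℝ f x) (Pi.single A 1) - Complex.I * (fderiv ℝ f x) (Pi.single A Complex.I))

/-- Conjugate Wirtinger derivative `∂_{Ā} f`. -/
noncomputable def wderBar {N : ℕ} (f : (Fin N → ℂ) → ℂ) (A : Fin N) (x : Fin N → ℂ) : ℂ :=
  (1 / 2) * ((fderiv ℝ f x) (Pi.single A 1) + Complex.I * (fderiv ℝ f x) (Pi.single A Complex.I))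

/-- Holomorphic Euler operator `E f = ∑_A x_A ∂_A f`. -/
noncomputable def eulerE {N : ℕ} (f : (Fin N → ℂ) → ℂ) (x : Fin N → ℂ) : ℂ :=
  ∑ A, x A * wder f A x

/-- Antiholomorphic Euler operator `Ē f = ∑_A conj(x_A) ∂_{Ā} f`. -/
noncomputable def eulerEbar {N : ℕ} (f : (Fin N → ℂ) → ℂ) (x : Fin N → ℂ) : ℂ :=
  ∑ A, (starRingEnd ℂ) (x A) * wderBar f A x

/-- The flat ambient Laplacian `Δ f = ∑_A ε_A ∂_A ∂_{Ā} f` for a signature `ε`. -/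
noncomputable def ambLap {N : ℕ} (ε : Fin N → ℝ) (f : (Fin N → ℂ) → ℂ) (x : Fin N → ℂ) : ℂ :=
  ∑ A, (ε A : ℂ) * wder (fun y => wderBar f A y) A x

/-- The defining function of the null cone, `r(x) = ∑_A ε_A |x_A|²`. -/
noncomputable def rFun {N : ℕ} (ε : Fin N → ℝ) (x : Fin N → ℂ) : ℂ :=
  ∑ A, (ε A : ℂ) * (Complex.normSq (x A) : ℂ)

section Aux

variable {N : ℕ}

lemma wder_mul {f g : (Fin N → ℂ) → ℂ} {A : Fin N} {x : Fin N → ℂ}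
    (hf : DifferentiableAt ℝ f x) (hg : DifferentiableAt ℝ g x) :
    wder (fun y => f y * g y) A x = f x * wder g A x + g x * wder f A x := by
  unfold wder
  rw [fderiv_fun_mul hf hg]
  simp only [ContinuousLinearMap.add_apply, ContinuousLinearMap.smul_apply, smul_eq_mul]
  ring

lemma wderBar_mul {f g : (Fin N → ℂ) → ℂ} {A : Fin N} {x : Fin N → ℂ}
    (hf : DifferentiableAt ℝ f x) (hg : DifferentiableAt ℝ g x) :
    wderBar (fun y => f y * g y) A x = f x * wderBar g A x + g x * wderBar f A x := by
  unfold wderBar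
  rw [fderiv_fun_mul hf hg]
  simp only [ContinuousLinearMap.add_apply, ContinuousLinearMap.smul_apply, smul_eq_mul]
  ring

lemma wder_sum {ι : Type*} (s : Finset ι) (F : ι → (Fin N → ℂ) → ℂ) {A : Fin N} {x : Fin N → ℂ}
    (h : ∀ i ∈ s, DifferentiableAt ℝ (F i) x) :
    wder (fun y => ∑ i ∈ s, F i y) A x = ∑ i ∈ s, wder (F i) A x := by
  unfold wder
  rw [fderiv_fun_sum h]
  simp only [ContinuousLinearMap.sum_apply, Finset.mul_sum, ← Finset.sum_sub_distrib]

-- coordinate function as CLM over ℝ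

noncomputable def coordCLM (A : Fin N) : (Fin N → ℂ) →L[ℝ] ℂ :=
  (ContinuousLinearMap.proj A : (Fin N → ℂ) →L[ℂ] ℂ).restrictScalars ℝ

noncomputable def conjCoordCLM (A : Fin N) : (Fin N → ℂ) →L[ℝ] ℂ :=
  (Complex.conjCLE.toContinuousLinearMap).comp (coordCLM A)

lemma coordCLM_apply (A : Fin N) (v : Fin N → ℂ) : coordCLM A v = v A := rfl

lemma conjCoordCLM_apply (A : Fin N) (v : Fin N → ℂ) :
    conjCoordCLM A v = (starRingEnd ℂ) (v A) := rfl

lemma diff_coord (A : Fin N) : Differentiable ℝ (fun y : Fin N → ℂ => y A) :=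
  (coordCLM A).differentiable

lemma diff_conjCoord (A : Fin N) :
    Differentiable ℝ (fun y : Fin N → ℂ => (starRingEnd ℂ) (y A)) :=
  (conjCoordCLM A).differentiable

lemma fderiv_coord (A : Fin N) (x : Fin N → ℂ) :
    fderiv ℝ (fun y : Fin N → ℂ => y A) x = coordCLM A :=
  ((coordCLM A).hasFDerivAt (x := x)).fderiv

lemma fderiv_conjCoord (A : Fin N) (x : Fin N → ℂ) :
    fderiv ℝ (fun y : Fin N → ℂ => (starRingEnd ℂ) (y A)) x = conjCoordCLM A :=
  ((conjCoordCLM A).hasFDerivAt (x := x)).fderiv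

lemma wder_coord (A B : Fin N) (x : Fin N → ℂ) :
    wder (fun y => y B) A x = if B = A then 1 else 0 := by
  unfold wder
  rw [fderiv_coord]
  simp only [coordCLM_apply]
  rcases eq_or_ne B A with h | h
  · subst h; simp [Pi.single_eq_same]; norm_num
  · simp [Pi.single_eq_of_ne h, if_neg h]

lemma wderBar_coord (A B : Fin N) (x : Fin N → ℂ) :
    wderBar (fun y => y B) A x = 0 := by
  unfold wderBar
  rw [fderiv_coord]
  simp only [coordCLM_apply]
  rcases eq_or_ne B A with h | h
  · subst h; simp [Pi.single_eq_same]
  · simp [Pi.single_eq_of_ne h]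

lemma wder_conjCoord (A B : Fin N) (x : Fin N → ℂ) :
    wder (fun y => (starRingEnd ℂ) (y B)) A x = 0 := by
  unfold wder
  rw [fderiv_conjCoord]
  simp only [conjCoordCLM_apply]
  rcases eq_or_ne B A with h | h
  · subst h; simp [Pi.single_eq_same, Complex.conj_I]
  · simp [Pi.single_eq_of_ne h]

lemma wderBar_conjCoord (A B : Fin N) (x : Fin N → ℂ) :
    wderBar (fun y => (starRingEnd ℂ) (y B)) A x = if B = A then 1 else 0 := by
  unfold wderBar
  rw [fderiv_conjCoord]
  simp only [conjCoordCLM_apply]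
  rcases eq_or_ne B A with h | h
  · subst h; simp [Pi.single_eq_same, Complex.conj_I]; norm_num
  · simp [Pi.single_eq_of_ne h, if_neg h]

lemma wder_add {f g : (Fin N → ℂ) → ℂ} {A : Fin N} {x : Fin N → ℂ}
    (hf : DifferentiableAt ℝ f x) (hg : DifferentiableAt ℝ g x) :
    wder (fun y => f y + g y) A x = wder f A x + wder g A x := by
  unfold wder
  rw [fderiv_fun_add hf hg]
  simp only [ContinuousLinearMap.add_apply]
  ring

lemma wder_const_mul (c : ℂ) {f : (Fin N → ℂ) → ℂ} {A : Fin N} {x : Fin N → ℂ}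
    (hf : DifferentiableAt ℝ f x) :
    wder (fun y => c * f y) A x = c * wder f A x := by
  unfold wder
  rw [fderiv_const_mul hf c]
  simp only [ContinuousLinearMap.smul_apply, smul_eq_mul]
  ring

lemma rFun_eq (ε : Fin N → ℝ) :
    rFun ε = fun x => ∑ B, (ε B : ℂ) * (x B * (starRingEnd ℂ) (x B)) := by
  funext x
  exact Finset.sum_congr rfl fun B _ => by rw [Complex.mul_conj]

lemma diff_rFun (ε : Fin N → ℝ) : Differentiable ℝ (rFun ε) := by
  rw [rFun_eq]
  apply Differentiable.fun_sum
  intro B _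
  exact ((diff_coord B).fun_mul (diff_conjCoord B)).const_mul _

lemma wder_rFun (ε : Fin N → ℝ) (A : Fin N) (x : Fin N → ℂ) :
    wder (rFun ε) A x = (ε A : ℂ) * (starRingEnd ℂ) (x A) := by
  rw [rFun_eq]
  rw [wder_sum _ _ (fun B _ => (((diff_coord B).fun_mul (diff_conjCoord B)).const_mul _ : Differentiable ℝ _) x)]
  have : ∀ B : Fin N, wder (fun y => (ε B : ℂ) * (y B * (starRingEnd ℂ) (y B))) A x
      = (ε B : ℂ) * (if B = A then (starRingEnd ℂ) (x B) else 0) := by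
    intro B
    rw [wder_const_mul _ ((diff_coord B).fun_mul (diff_conjCoord B) x),
      wder_mul (diff_coord B x) (diff_conjCoord B x), wder_conjCoord, wder_coord]
    rcases eq_or_ne B A with h | h <;> simp [h]
  rw [Finset.sum_congr rfl fun B _ => this B, Finset.sum_eq_single A]
  · simp
  · intro B _ h; simp [h]
  · simp

lemma wderBar_rFun (ε : Fin N → ℝ) (A : Fin N) (x : Fin N → ℂ) :
    wderBar (rFun ε) A x = (ε A : ℂ) * x A := by
  rw [rFun_eq]
  have hsum : wderBar (fun y => ∑ B, (ε B : ℂ) * (y B * (starRingEnd ℂ) (y B))) A x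
      = ∑ B, wderBar (fun y => (ε B : ℂ) * (y B * (starRingEnd ℂ) (y B))) A x := by
    unfold wderBar
    rw [fderiv_fun_sum (fun B _ => (((diff_coord B).fun_mul (diff_conjCoord B)).const_mul _ : Differentiable ℝ _) x)]
    simp only [ContinuousLinearMap.sum_apply, Finset.mul_sum, ← Finset.sum_add_distrib]
  rw [hsum]
  have hc : ∀ (c : ℂ) {g : (Fin N → ℂ) → ℂ} (hg : DifferentiableAt ℝ g x),
      wderBar (fun y => c * g y) A x = c * wderBar g A x := by
    intro c g hg
    unfold wderBar
    rw [fderiv_const_mul hg c]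
    simp only [ContinuousLinearMap.smul_apply, smul_eq_mul]
    ring
  have : ∀ B : Fin N, wderBar (fun y => (ε B : ℂ) * (y B * (starRingEnd ℂ) (y B))) A x
      = (ε B : ℂ) * (if B = A then x B else 0) := by
    intro B
    rw [hc _ ((diff_coord B).fun_mul (diff_conjCoord B) x),
      wderBar_mul (diff_coord B x) (diff_conjCoord B x), wderBar_conjCoord, wderBar_coord]
    rcases eq_or_ne B A with h | h <;> simp [h]
  rw [Finset.sum_congr rfl fun B _ => this B, Finset.sum_eq_single A]
  · simp
  · intro B _ h; simp [h]
  · simp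

lemma diff_wderBar {f : (Fin N → ℂ) → ℂ} (hf : ContDiff ℝ 2 f) (A : Fin N) :
    Differentiable ℝ (wderBar f A) := by
  have h1 : ContDiff ℝ 1 (fderiv ℝ f) := hf.fderiv_right (by norm_num)
  have h2 : ∀ v : Fin N → ℂ, Differentiable ℝ (fun y => (fderiv ℝ f y) v) := fun v =>
    (h1.clm_apply contDiff_const).differentiable (by norm_num)
  unfold wderBar
  exact (((h2 _).add ((h2 _).const_mul Complex.I)).const_mul (1/2))

end Aux

/-- The flat-model case of the ambient commutator identity `[Δ, r] = n + E + Ē + 2`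
(with `N = n + 2`). -/
theorem ambient_lap_r_commutator (N : ℕ) (hN : 1 ≤ N) (ε : Fin N → ℝ)
    (hε : ∀ A, ε A = 1 ∨ ε A = -1)
    (f : (Fin N → ℂ) → ℂ) (hf : ContDiff ℝ 2 f) (x : Fin N → ℂ) :
    ambLap ε (fun y => rFun ε y * f y) x =
      rFun ε x * ambLap ε f x + (N : ℂ) * f x + eulerE f x + eulerEbar f x := by
  have hfd : Differentiable ℝ f := hf.differentiable (by norm_num)
  have hrd := diff_rFun ε
  have hwb := diff_wderBar hf
  have hε2 : ∀ A, (ε A : ℂ) * (ε A : ℂ) = 1 := by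
    intro A; rcases hε A with h | h <;> rw [h] <;> norm_num
  have hstep : ∀ A : Fin N, (fun y => wderBar (fun z => rFun ε z * f z) A y)
      = fun y => (ε A : ℂ) * (y A * f y) + rFun ε y * wderBar f A y := by
    intro A; funext y
    rw [wderBar_mul (hrd y) (hfd y), wderBar_rFun]
    ring
  have hterm : ∀ A : Fin N,
      wder (fun y => wderBar (fun z => rFun ε z * f z) A y) A x
      = (ε A : ℂ) * (x A * wder f A x + f x * 1)
        + (rFun ε x * wder (fun y => wderBar f A y) A x
          + wderBar f A x * ((ε A : ℂ) * (starRingEnd ℂ) (x A))) := by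
    intro A
    rw [hstep A]
    rw [wder_add (((diff_coord A).fun_mul hfd).const_mul _ x) ((hrd.fun_mul (hwb A)) x)]
    rw [wder_const_mul _ ((diff_coord A).fun_mul hfd x), wder_mul (diff_coord A x) (hfd x),
      wder_mul (hrd x) (hwb A x), wder_coord, wder_rFun]
    simp
  have key : ambLap ε (fun y => rFun ε y * f y) x
      = ∑ A, (x A * wder f A x + f x
          + rFun ε x * ((ε A : ℂ) * wder (fun y => wderBar f A y) A x)
          + (starRingEnd ℂ) (x A) * wderBar f A x) := by
    unfold ambLap
    refine Finset.sum_congr rfl fun A _ => ?_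
    rw [hterm A]
    linear_combination (x A * wder f A x + f x + (starRingEnd ℂ) (x A) * wderBar f A x) * hε2 A
  rw [key, Finset.sum_add_distrib, Finset.sum_add_distrib, Finset.sum_add_distrib,
    Finset.sum_const, ← Finset.mul_sum, Finset.card_univ, Fintype.card_fin, nsmul_eq_mul]
  unfold eulerE eulerEbar ambLap
  ring
end

section
/- Fix N ≥ 3, a signature function ε : Fin N → {1, −1}, and a natural number k ≥ 0. Define, for sufficiently differentiable g : ℂ^N → ℂ and indices A, B ∈ Fin N, the flat ambient tractor-D operators D_A g = (N − 1)·∂_A g + E(∂_A g) + Ē(∂_A g) − ε_A·conj(x_A)·Δg and D_{B̄} g = (N − 1)·∂_{B̄} g + E(∂_{B̄} g) + Ē(∂_{B̄} g) − ε_B·x_B·Δg. Let f : ℂ^N → ℂ be infinitely differentiable in the real sense and suppose that, at every point, Ef = ((k + 3 − N)/2)·f and Ēf = ((k + 3 − N)/2)·f. Then for all indices A, B and every point x: Δ^k( D_A(D_{B̄} f) )(x) = ε_A ε_B · conj(x_A) · x_B · (Δ^{k+2} f)(x). (This is Corollary 6.3 / Theorem 6.5 of the paper — the identity Δ^k D_A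 D_{B̄} = Z_A Z_{B̄} Δ^{k+2} + curvature terms, on densities of weight (−(n−1−k)/2, −(n−1−k)/2) with N = n + 2 — in the flat, curvature-free ambient space, where all curvature contributions and error terms vanish identically; it is the key step expressing the CR GJMS operators through tractor-D operators.) -/
open Finset

/-- The flat ambient tractor-D operator
`D_A g = (N−1)∂_A g + E(∂_A g) + Ē(∂_A g) − ε_A conj(x_A) Δg`. -/
noncomputable def Dop {N : ℕ} (ε : Fin N → ℝ) (A : Fin N) (g : (Fin N → ℂ) → ℂ)
    (x : Fin N → ℂ) : ℂ :=
  ((N : ℂ) - 1) * wder g A x + eulerE (fun y => wder g A y) x +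
    eulerEbar (fun y => wder g A y) x - (ε A : ℂ) * (starRingEnd ℂ) (x A) * ambLap ε g x

/-- The conjugate flat ambient tractor-D operator
`D_{B̄} g = (N−1)∂_{B̄} g + E(∂_{B̄} g) + Ē(∂_{B̄} g) − ε_B x_B Δg`. -/
noncomputable def DopBar {N : ℕ} (ε : Fin N → ℝ) (B : Fin N) (g : (Fin N → ℂ) → ℂ)
    (x : Fin N → ℂ) : ℂ :=
  ((N : ℂ) - 1) * wderBar g B x + eulerE (fun y => wderBar g B y) x +
    eulerEbar (fun y => wderBar g B y) x - (ε B : ℂ) * x B * ambLap ε g x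

namespace CRaux

variable {N : ℕ}

/-- directional derivative -/
noncomputable def dd (v : Fin N → ℂ) (f : (Fin N → ℂ) → ℂ) (x : Fin N → ℂ) : ℂ :=
  fderiv ℝ f x v

abbrev Sm (f : (Fin N → ℂ) → ℂ) : Prop := ContDiff ℝ (⊤ : ℕ∞) f

theorem le_inf' : (1 : WithTop ℕ∞) ≤ ((⊤:ℕ∞) : WithTop ℕ∞) := by
  exact_mod_cast le_top

theorem succ_le_inf' : ((⊤:ℕ∞) : WithTop ℕ∞) + 1 ≤ ((⊤:ℕ∞) : WithTop ℕ∞) :=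
  le_of_eq ENat.coe_top_add_one

theorem Sm.diffAt {f : (Fin N → ℂ) → ℂ} (hf : Sm f) (x : Fin N → ℂ) :
    DifferentiableAt ℝ f x :=
  (hf.differentiable (by simp)).differentiableAt

theorem dd_smooth {f : (Fin N → ℂ) → ℂ} (hf : Sm f) (v : Fin N → ℂ) : Sm (dd v f) := by
  have h1 : ContDiff ℝ (⊤ : ℕ∞) (fderiv ℝ f) := hf.fderiv_right succ_le_inf'
  exact (ContinuousLinearMap.apply ℝ ℂ v).contDiff.comp h1

theorem dd_comm {f : (Fin N → ℂ) → ℂ} (hf : Sm f) (v w x : Fin N → ℂ) :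
    dd v (dd w f) x = dd w (dd v f) x := by
  have hd : Differentiable ℝ (fderiv ℝ f) :=
    (hf.fderiv_right succ_le_inf').differentiable (by simp)
  have key : ∀ u : Fin N → ℂ,
      fderiv ℝ (fun y => fderiv ℝ f y u) x =
        (ContinuousLinearMap.apply ℝ ℂ u).comp (fderiv ℝ (fderiv ℝ f) x) := by
    intro u
    have : (fun y => fderiv ℝ f y u) =
        (ContinuousLinearMap.apply ℝ ℂ u) ∘ (fderiv ℝ f) := rfl
    rw [this, fderiv_comp _ (ContinuousLinearMap.differentiableAt _) (hd x),
      ContinuousLinearMap.fderiv]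
  have hsymm : ∀ a b : Fin N → ℂ,
      fderiv ℝ (fderiv ℝ f) x a b = fderiv ℝ (fderiv ℝ f) x b a := by
    intro a b
    exact second_derivative_symmetric
      (fun y => ((hf.differentiable (by simp)) y).hasFDerivAt)
      ((hd x).hasFDerivAt) a b
  show fderiv ℝ (dd w f) x v = fderiv ℝ (dd v f) x w
  rw [show (dd w f) = (fun y => fderiv ℝ f y w) from rfl,
    show (dd v f) = (fun y => fderiv ℝ f y v) from rfl, key, key]
  simp only [ContinuousLinearMap.coe_comp', Function.comp_apply,
    ContinuousLinearMap.apply_apply]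
  exact hsymm v w

section ddRules

variable {f g : (Fin N → ℂ) → ℂ} {v x : Fin N → ℂ} {c : ℂ}

theorem dd_add (hf : DifferentiableAt ℝ f x) (hg : DifferentiableAt ℝ g x) :
    dd v (fun y => f y + g y) x = dd v f x + dd v g x := by
  simp only [dd]; rw [fderiv_fun_add hf hg]; rfl

theorem dd_const_mul (hf : DifferentiableAt ℝ f x) (c : ℂ) :
    dd v (fun y => c * f y) x = c * dd v f x := by
  simp only [dd]; rw [fderiv_const_mul hf c]; rfl

theorem dd_mul (hf : DifferentiableAt ℝ f x) (hg : DifferentiableAt ℝ g x) :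
    dd v (fun y => f y * g y) x = dd v f x * g x + f x * dd v g x := by
  simp only [dd]; rw [fderiv_fun_mul hf hg]
  simp only [ContinuousLinearMap.add_apply, ContinuousLinearMap.smul_apply, smul_eq_mul]
  ring

theorem dd_sum {ι : Type*} [Fintype ι] {F : ι → (Fin N → ℂ) → ℂ}
    (h : ∀ i, DifferentiableAt ℝ (F i) x) :
    dd v (fun y => ∑ i, F i y) x = ∑ i, dd v (F i) x := by
  simp only [dd]; rw [fderiv_fun_sum (fun i _ => h i)]
  simp [ContinuousLinearMap.sum_apply]

theorem dd_coord (B : Fin N) : dd v (fun y => y B) x = v B := by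
  simp only [dd]
  rw [show (fun y : Fin N → ℂ => y B) =
      ⇑(ContinuousLinearMap.proj (R := ℝ) (φ := fun _ : Fin N => ℂ) B) from rfl,
    ContinuousLinearMap.fderiv]
  rfl

theorem dd_coord_conj (B : Fin N) :
    dd v (fun y => (starRingEnd ℂ) (y B)) x = (starRingEnd ℂ) (v B) := by
  simp only [dd]
  have : (fun y : Fin N → ℂ => (starRingEnd ℂ) (y B)) =
      ⇑((Complex.conjCLE.toContinuousLinearMap).comp
        (ContinuousLinearMap.proj (R := ℝ) (φ := fun _ : Fin N => ℂ) B)) := by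
    funext y; simp
  rw [this, ContinuousLinearMap.fderiv]
  simp

end ddRules

section wgenLayer

variable {f g : (Fin N → ℂ) → ℂ} {x : Fin N → ℂ} {c c' : ℂ} {A B : Fin N}

/-- generalized Wirtinger-type operator -/
noncomputable def wgen (c : ℂ) (A : Fin N) (f : (Fin N → ℂ) → ℂ) (x : Fin N → ℂ) : ℂ :=
  (1 / 2) * (dd (Pi.single A 1) f x + c * dd (Pi.single A Complex.I) f x)

theorem wder_eq_wgen : wder f A x = wgen (-Complex.I) A f x := by
  simp only [wder, wgen, dd]; try ring

theorem wderBar_eq_wgen : wderBar f A x = wgen Complex.I A f x := by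
  simp only [wderBar, wgen, dd]; try ring

theorem wder_fun_eq (f : (Fin N → ℂ) → ℂ) (A : Fin N) :
    wder f A = wgen (-Complex.I) A f := funext fun _ => wder_eq_wgen

theorem wderBar_fun_eq (f : (Fin N → ℂ) → ℂ) (A : Fin N) :
    wderBar f A = wgen Complex.I A f := funext fun _ => wderBar_eq_wgen

theorem Sm_wgen (hf : Sm f) : Sm (wgen c A f) := by
  have h : wgen c A f = fun x =>
      (1 / 2 : ℂ) * (dd (Pi.single A 1) f x + c * dd (Pi.single A Complex.I) f x) := rfl
  rw [h]
  exact contDiff_const.mul ((dd_smooth hf _).add (contDiff_const.mul (dd_smooth hf _)))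

theorem Sm_wder (hf : Sm f) : Sm (wder f A) := by
  rw [wder_fun_eq]; exact Sm_wgen hf

theorem Sm_wderBar (hf : Sm f) : Sm (wderBar f A) := by
  rw [wderBar_fun_eq]; exact Sm_wgen hf

theorem dd_wgen (hf : Sm f) (v : Fin N → ℂ) :
    dd v (wgen c B f) x =
      (1 / 2) * (dd v (dd (Pi.single B 1) f) x + c * dd v (dd (Pi.single B Complex.I) f) x) := by
  have h : wgen c B f = fun y =>
      (1 / 2 : ℂ) * (dd (Pi.single B 1) f y + c * dd (Pi.single B Complex.I) f y) := rfl
  rw [h, dd_const_mul (Sm.diffAt ((dd_smooth hf _).add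
      (contDiff_const.mul (dd_smooth hf _))) x),
    dd_add (Sm.diffAt (dd_smooth hf _) x)
      (Sm.diffAt (contDiff_const.mul (dd_smooth hf _)) x),
    dd_const_mul (Sm.diffAt (dd_smooth hf _) x)]

theorem wgen_comm (hf : Sm f) : wgen c A (wgen c' B f) x = wgen c' B (wgen c A f) x := by
  show (1 / 2 : ℂ) * (dd (Pi.single A 1) (wgen c' B f) x
      + c * dd (Pi.single A Complex.I) (wgen c' B f) x)
    = (1 / 2 : ℂ) * (dd (Pi.single B 1) (wgen c A f) x
      + c' * dd (Pi.single B Complex.I) (wgen c A f) x)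
  rw [dd_wgen hf, dd_wgen hf, dd_wgen hf, dd_wgen hf,
    dd_comm hf (Pi.single A 1) (Pi.single B 1),
    dd_comm hf (Pi.single A 1) (Pi.single B Complex.I),
    dd_comm hf (Pi.single A Complex.I) (Pi.single B 1),
    dd_comm hf (Pi.single A Complex.I) (Pi.single B Complex.I)]
  ring

theorem wgen_add (hf : Sm f) (hg : Sm g) :
    wgen c A (fun y => f y + g y) x = wgen c A f x + wgen c A g x := by
  simp only [wgen]
  rw [dd_add (hf.diffAt x) (hg.diffAt x), dd_add (hf.diffAt x) (hg.diffAt x)]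
  ring

theorem wgen_const_mul (hf : Sm f) (d : ℂ) :
    wgen c A (fun y => d * f y) x = d * wgen c A f x := by
  simp only [wgen]
  rw [dd_const_mul (hf.diffAt x) d, dd_const_mul (hf.diffAt x) d]
  ring

theorem wgen_sub (hf : Sm f) (hg : Sm g) :
    wgen c A (fun y => f y - g y) x = wgen c A f x - wgen c A g x := by
  have h : (fun y => f y - g y) = fun y => f y + (-1 : ℂ) * g y := by
    funext y; ring
  rw [h, wgen_add hf (contDiff_const.mul hg), wgen_const_mul hg]
  ring

theorem wgen_mul (hf : Sm f) (hg : Sm g) :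
    wgen c A (fun y => f y * g y) x = wgen c A f x * g x + f x * wgen c A g x := by
  simp only [wgen]
  rw [dd_mul (hf.diffAt x) (hg.diffAt x), dd_mul (hf.diffAt x) (hg.diffAt x)]
  ring

theorem wgen_sum {ι : Type*} [Fintype ι] {F : ι → (Fin N → ℂ) → ℂ}
    (h : ∀ i, Sm (F i)) :
    wgen c A (fun y => ∑ i, F i y) x = ∑ i, wgen c A (F i) x := by
  simp only [wgen]
  rw [dd_sum (fun i => (h i).diffAt x), dd_sum (fun i => (h i).diffAt x),
    Finset.mul_sum, ← Finset.sum_add_distrib, Finset.mul_sum]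

end wgenLayer

section wderRules

variable {f g : (Fin N → ℂ) → ℂ} {x : Fin N → ℂ} {c : ℂ} {A B : Fin N}

theorem wder_add (hf : Sm f) (hg : Sm g) :
    wder (fun y => f y + g y) A x = wder f A x + wder g A x := by
  simp only [wder_eq_wgen]; exact wgen_add hf hg

theorem wder_sub (hf : Sm f) (hg : Sm g) :
    wder (fun y => f y - g y) A x = wder f A x - wder g A x := by
  simp only [wder_eq_wgen]; exact wgen_sub hf hg

theorem wder_const_mul (hf : Sm f) (c : ℂ) :
    wder (fun y => c * f y) A x = c * wder f A x := by
  simp only [wder_eq_wgen]; exact wgen_const_mul hf c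

theorem wder_mul (hf : Sm f) (hg : Sm g) :
    wder (fun y => f y * g y) A x = wder f A x * g x + f x * wder g A x := by
  simp only [wder_eq_wgen]; exact wgen_mul hf hg

theorem wder_sum {ι : Type*} [Fintype ι] {F : ι → (Fin N → ℂ) → ℂ} (h : ∀ i, Sm (F i)) :
    wder (fun y => ∑ i, F i y) A x = ∑ i, wder (F i) A x := by
  simp only [wder_eq_wgen]; exact wgen_sum h

theorem wderBar_add (hf : Sm f) (hg : Sm g) :
    wderBar (fun y => f y + g y) A x = wderBar f A x + wderBar g A x := by
  simp only [wderBar_eq_wgen]; exact wgen_add hf hg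

theorem wderBar_sub (hf : Sm f) (hg : Sm g) :
    wderBar (fun y => f y - g y) A x = wderBar f A x - wderBar g A x := by
  simp only [wderBar_eq_wgen]; exact wgen_sub hf hg

theorem wderBar_const_mul (hf : Sm f) (c : ℂ) :
    wderBar (fun y => c * f y) A x = c * wderBar f A x := by
  simp only [wderBar_eq_wgen]; exact wgen_const_mul hf c

theorem wderBar_mul (hf : Sm f) (hg : Sm g) :
    wderBar (fun y => f y * g y) A x = wderBar f A x * g x + f x * wderBar g A x := by
  simp only [wderBar_eq_wgen]; exact wgen_mul hf hg

theorem wderBar_sum {ι : Type*} [Fintype ι] {F : ι → (Fin N → ℂ) → ℂ} (h : ∀ i, Sm (F i)) :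
    wderBar (fun y => ∑ i, F i y) A x = ∑ i, wderBar (F i) A x := by
  simp only [wderBar_eq_wgen]; exact wgen_sum h

theorem Sm_coord (B : Fin N) : Sm (fun y : Fin N → ℂ => y B) :=
  (ContinuousLinearMap.proj (R := ℝ) (φ := fun _ : Fin N => ℂ) B).contDiff

theorem Sm_coord_conj (B : Fin N) : Sm (fun y : Fin N → ℂ => (starRingEnd ℂ) (y B)) := by
  have : (fun y : Fin N → ℂ => (starRingEnd ℂ) (y B)) =
      ⇑((Complex.conjCLE.toContinuousLinearMap).comp
        (ContinuousLinearMap.proj (R := ℝ) (φ := fun _ : Fin N => ℂ) B)) := by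
    funext y; simp
  rw [this]; exact ContinuousLinearMap.contDiff _

theorem wder_coord : wder (fun y => y B) A x = if B = A then 1 else 0 := by
  rw [show wder (fun y : Fin N → ℂ => y B) A x = (1/2) * (dd (Pi.single A 1) (fun y => y B) x
      - Complex.I * dd (Pi.single A Complex.I) (fun y => y B) x) from rfl, dd_coord, dd_coord]
  rcases eq_or_ne B A with h | h <;>
    simp [Pi.single_apply, h, Complex.I_mul_I] <;> ring

theorem wderBar_coord : wderBar (fun y => y B) A x = 0 := by
  rw [show wderBar (fun y : Fin N → ℂ => y B) A x = (1/2) * (dd (Pi.single A 1) (fun y => y B) x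
      + Complex.I * dd (Pi.single A Complex.I) (fun y => y B) x) from rfl, dd_coord, dd_coord]
  rcases eq_or_ne B A with h | h <;>
    simp [Pi.single_apply, h, Complex.I_mul_I] <;> ring

theorem wder_coord_conj :
    wder (fun y => (starRingEnd ℂ) (y B)) A x = 0 := by
  rw [show wder (fun y : Fin N → ℂ => (starRingEnd ℂ) (y B)) A x
      = (1/2) * (dd (Pi.single A 1) (fun y => (starRingEnd ℂ) (y B)) x
      - Complex.I * dd (Pi.single A Complex.I) (fun y => (starRingEnd ℂ) (y B)) x) from rfl,
    dd_coord_conj, dd_coord_conj]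
  rcases eq_or_ne B A with h | h <;>
    simp [Pi.single_apply, h, Complex.I_mul_I] <;> ring_nf <;>
    simp [Complex.ext_iff]

theorem wderBar_coord_conj :
    wderBar (fun y => (starRingEnd ℂ) (y B)) A x = if B = A then 1 else 0 := by
  rw [show wderBar (fun y : Fin N → ℂ => (starRingEnd ℂ) (y B)) A x
      = (1/2) * (dd (Pi.single A 1) (fun y => (starRingEnd ℂ) (y B)) x
      + Complex.I * dd (Pi.single A Complex.I) (fun y => (starRingEnd ℂ) (y B)) x) from rfl,
    dd_coord_conj, dd_coord_conj]
  rcases eq_or_ne B A with h | h <;>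
    simp [Pi.single_apply, h, Complex.I_mul_I] <;> ring_nf <;>
    simp [Complex.ext_iff]

theorem wder_wder_comm (hf : Sm f) :
    wder (wder f B) A x = wder (wder f A) B x := by
  rw [wder_fun_eq f B, wder_fun_eq f A]
  simp only [wder_eq_wgen]
  exact wgen_comm hf

theorem wder_wderBar_comm (hf : Sm f) :
    wder (wderBar f B) A x = wderBar (wder f A) B x := by
  rw [wderBar_fun_eq f B, wder_fun_eq f A]
  rw [wder_eq_wgen, wderBar_eq_wgen]
  exact wgen_comm hf

theorem wderBar_wderBar_comm (hf : Sm f) :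
    wderBar (wderBar f B) A x = wderBar (wderBar f A) B x := by
  rw [wderBar_fun_eq f B, wderBar_fun_eq f A]
  simp only [wderBar_eq_wgen]
  exact wgen_comm hf

theorem wder_coord_mul (hg : Sm g) :
    wder (fun y => y B * g y) A x = (if B = A then 1 else 0) * g x + x B * wder g A x := by
  rw [wder_mul (Sm_coord B) hg, wder_coord]

theorem wderBar_coord_mul (hg : Sm g) :
    wderBar (fun y => y B * g y) A x = x B * wderBar g A x := by
  rw [wderBar_mul (Sm_coord B) hg, wderBar_coord]; ring

theorem wder_conj_mul (hg : Sm g) :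
    wder (fun y => (starRingEnd ℂ) (y B) * g y) A x
      = (starRingEnd ℂ) (x B) * wder g A x := by
  rw [wder_mul (Sm_coord_conj B) hg, wder_coord_conj]; ring

theorem wderBar_conj_mul (hg : Sm g) :
    wderBar (fun y => (starRingEnd ℂ) (y B) * g y) A x
      = (if B = A then 1 else 0) * g x + (starRingEnd ℂ) (x B) * wderBar g A x := by
  rw [wderBar_mul (Sm_coord_conj B) hg, wderBar_coord_conj]

end wderRules

section lapRules

variable {ε : Fin N → ℝ} {f g : (Fin N → ℂ) → ℂ} {x : Fin N → ℂ} {c : ℂ} {A B : Fin N}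

theorem ambLap_unfold (ε : Fin N → ℝ) (f : (Fin N → ℂ) → ℂ) (x : Fin N → ℂ) :
    ambLap ε f x = ∑ C, (ε C : ℂ) * wder (wderBar f C) C x := rfl

theorem Sm_ambLap (hf : Sm f) : Sm (ambLap ε f) := by
  have h : ambLap ε f = fun x => ∑ C, (ε C : ℂ) * wder (wderBar f C) C x := rfl
  rw [h]
  exact ContDiff.sum fun C _ => contDiff_const.mul (Sm_wder (Sm_wderBar hf))

theorem wgen_lap (hf : Sm f) : wgen c A (ambLap ε f) x = ambLap ε (wgen c A f) x := by
  have h1 : ambLap ε f = fun y => ∑ C, (ε C : ℂ) * wder (wderBar f C) C y := rfl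
  rw [h1, wgen_sum (fun C => contDiff_const.mul (Sm_wder (Sm_wderBar hf))),
    ambLap_unfold]
  refine Finset.sum_congr rfl fun C _ => ?_
  rw [wgen_const_mul (Sm_wder (Sm_wderBar hf))]
  congr 1
  rw [wder_fun_eq (wderBar f C) C, wderBar_fun_eq f C, wder_eq_wgen,
    wderBar_fun_eq (wgen c A f) C, wgen_comm (Sm_wgen hf)]
  congr 1
  exact funext fun y => wgen_comm hf

theorem wder_lap (hf : Sm f) : wder (ambLap ε f) A x = ambLap ε (wder f A) x := by
  rw [wder_eq_wgen, wgen_lap hf]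
  congr 1
  try exact (wder_fun_eq f A).symm

theorem wderBar_lap (hf : Sm f) : wderBar (ambLap ε f) A x = ambLap ε (wderBar f A) x := by
  rw [wderBar_eq_wgen, wgen_lap hf]
  congr 1
  try exact (wderBar_fun_eq f A).symm

theorem lap_add (hf : Sm f) (hg : Sm g) :
    ambLap ε (fun y => f y + g y) x = ambLap ε f x + ambLap ε g x := by
  calc ambLap ε (fun y => f y + g y) x
      = ∑ C, (ε C : ℂ) * wder (fun y => wderBar (fun z => f z + g z) C y) C x := rfl
    _ = ∑ C, ((ε C : ℂ) * wder (wderBar f C) C x + (ε C : ℂ) * wder (wderBar g C) C x) := by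
        refine Finset.sum_congr rfl fun C _ => ?_
        have h1 : (fun y => wderBar (fun z => f z + g z) C y)
            = fun y => wderBar f C y + wderBar g C y :=
          funext fun y => wderBar_add hf hg
        rw [h1, wder_add (Sm_wderBar hf) (Sm_wderBar hg)]
        ring
    _ = ambLap ε f x + ambLap ε g x := by
        rw [Finset.sum_add_distrib]; rfl

theorem lap_const_mul (hf : Sm f) (c : ℂ) :
    ambLap ε (fun y => c * f y) x = c * ambLap ε f x := by
  calc ambLap ε (fun y => c * f y) x
      = ∑ C, (ε C : ℂ) * wder (fun y => wderBar (fun z => c * f z) C y) C x := rfl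
    _ = ∑ C, c * ((ε C : ℂ) * wder (wderBar f C) C x) := by
        refine Finset.sum_congr rfl fun C _ => ?_
        have h1 : (fun y => wderBar (fun z => c * f z) C y)
            = fun y => c * wderBar f C y :=
          funext fun y => wderBar_const_mul hf c
        rw [h1, wder_const_mul (Sm_wderBar hf)]
        ring
    _ = c * ambLap ε f x := by rw [← Finset.mul_sum]; try rfl

theorem lap_sub (hf : Sm f) (hg : Sm g) :
    ambLap ε (fun y => f y - g y) x = ambLap ε f x - ambLap ε g x := by
  have h : (fun y => f y - g y) = fun y => f y + (-1 : ℂ) * g y := by funext y; ring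
  rw [h, lap_add hf (contDiff_const.mul hg), lap_const_mul hg]
  ring

theorem lap_coord_mul (hg : Sm g) :
    ambLap ε (fun y => y B * g y) x
      = (ε B : ℂ) * wderBar g B x + x B * ambLap ε g x := by
  calc ambLap ε (fun y => y B * g y) x
      = ∑ C, (ε C : ℂ) * wder (fun y => wderBar (fun z => z B * g z) C y) C x := rfl
    _ = ∑ C, ((if B = C then (1:ℂ) else 0) * ((ε C : ℂ) * wderBar g C x)
          + x B * ((ε C : ℂ) * wder (wderBar g C) C x)) := by
        refine Finset.sum_congr rfl fun C _ => ?_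
        have h1 : (fun y => wderBar (fun z => z B * g z) C y)
            = fun y => y B * wderBar g C y :=
          funext fun y => wderBar_coord_mul hg
        rw [h1, wder_coord_mul (Sm_wderBar hg)]
        ring
    _ = (ε B : ℂ) * wderBar g B x + x B * ambLap ε g x := by
        rw [Finset.sum_add_distrib]
        congr 1
        · simp [ite_mul]
        · rw [← Finset.mul_sum]; try rfl

theorem lap_conj_mul (hg : Sm g) :
    ambLap ε (fun y => (starRingEnd ℂ) (y A) * g y) x
      = (ε A : ℂ) * wder g A x + (starRingEnd ℂ) (x A) * ambLap ε g x := by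
  calc ambLap ε (fun y => (starRingEnd ℂ) (y A) * g y) x
      = ∑ C, (ε C : ℂ) * wder (fun y => wderBar (fun z => (starRingEnd ℂ) (z A) * g z) C y)
          C x := rfl
    _ = ∑ C, ((if A = C then (1:ℂ) else 0) * ((ε C : ℂ) * wder g C x)
          + (starRingEnd ℂ) (x A) * ((ε C : ℂ) * wder (wderBar g C) C x)) := by
        refine Finset.sum_congr rfl fun C _ => ?_
        have h1 : (fun y => wderBar (fun z => (starRingEnd ℂ) (z A) * g z) C y)
            = fun y => (if A = C then (1:ℂ) else 0) * g y
                + (starRingEnd ℂ) (y A) * wderBar g C y :=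
          funext fun y => wderBar_conj_mul hg
        rw [h1, wder_add (contDiff_const.mul hg)
            ((Sm_coord_conj A).mul (Sm_wderBar hg)),
          wder_const_mul hg, wder_conj_mul (Sm_wderBar hg)]
        ring
    _ = (ε A : ℂ) * wder g A x + (starRingEnd ℂ) (x A) * ambLap ε g x := by
        rw [Finset.sum_add_distrib]
        congr 1
        · simp [ite_mul]
        · rw [← Finset.mul_sum]; try rfl

end lapRules

section eulerRules

variable {ε : Fin N → ℝ} {f g : (Fin N → ℂ) → ℂ} {x : Fin N → ℂ} {c p q : ℂ} {A B : Fin N}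

theorem eulerE_unfold (f : (Fin N → ℂ) → ℂ) (x : Fin N → ℂ) :
    eulerE f x = ∑ C, x C * wder f C x := rfl

theorem eulerEbar_unfold (f : (Fin N → ℂ) → ℂ) (x : Fin N → ℂ) :
    eulerEbar f x = ∑ C, (starRingEnd ℂ) (x C) * wderBar f C x := rfl

theorem eulerE_sub (hf : Sm f) (hg : Sm g) :
    eulerE (fun y => f y - g y) x = eulerE f x - eulerE g x := by
  simp only [eulerE_unfold]
  rw [← Finset.sum_sub_distrib]
  refine Finset.sum_congr rfl fun C _ => ?_
  rw [wder_sub hf hg]; ring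

theorem eulerE_const_mul (hf : Sm f) (c : ℂ) :
    eulerE (fun y => c * f y) x = c * eulerE f x := by
  simp only [eulerE_unfold]
  rw [Finset.mul_sum]
  refine Finset.sum_congr rfl fun C _ => ?_
  rw [wder_const_mul hf]; ring

theorem eulerEbar_sub (hf : Sm f) (hg : Sm g) :
    eulerEbar (fun y => f y - g y) x = eulerEbar f x - eulerEbar g x := by
  simp only [eulerEbar_unfold]
  rw [← Finset.sum_sub_distrib]
  refine Finset.sum_congr rfl fun C _ => ?_
  rw [wderBar_sub hf hg]; ring

theorem eulerEbar_const_mul (hf : Sm f) (c : ℂ) :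
    eulerEbar (fun y => c * f y) x = c * eulerEbar f x := by
  simp only [eulerEbar_unfold]
  rw [Finset.mul_sum]
  refine Finset.sum_congr rfl fun C _ => ?_
  rw [wderBar_const_mul hf]; ring

theorem eulerE_sum {ι : Type*} [Fintype ι] {F : ι → (Fin N → ℂ) → ℂ} (h : ∀ i, Sm (F i)) :
    eulerE (fun y => ∑ i, F i y) x = ∑ i, eulerE (F i) x := by
  simp only [eulerE_unfold]
  calc ∑ C, x C * wder (fun y => ∑ i, F i y) C x
      = ∑ C, ∑ i, x C * wder (F i) C x := by
        refine Finset.sum_congr rfl fun C _ => ?_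
        rw [wder_sum h, Finset.mul_sum]
    _ = ∑ i, ∑ C, x C * wder (F i) C x := Finset.sum_comm

theorem eulerEbar_sum {ι : Type*} [Fintype ι] {F : ι → (Fin N → ℂ) → ℂ} (h : ∀ i, Sm (F i)) :
    eulerEbar (fun y => ∑ i, F i y) x = ∑ i, eulerEbar (F i) x := by
  simp only [eulerEbar_unfold]
  calc ∑ C, (starRingEnd ℂ) (x C) * wderBar (fun y => ∑ i, F i y) C x
      = ∑ C, ∑ i, (starRingEnd ℂ) (x C) * wderBar (F i) C x := by
        refine Finset.sum_congr rfl fun C _ => ?_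
        rw [wderBar_sum h, Finset.mul_sum]
    _ = ∑ i, ∑ C, (starRingEnd ℂ) (x C) * wderBar (F i) C x := Finset.sum_comm

theorem eulerE_coord_mul (hg : Sm g) :
    eulerE (fun y => y B * g y) x = x B * g x + x B * eulerE g x := by
  simp only [eulerE_unfold]
  have h : ∀ C, x C * wder (fun y => y B * g y) C x
      = (if B = C then (1:ℂ) else 0) * (x B * g x) + x B * (x C * wder g C x) := by
    intro C
    rw [wder_coord_mul hg]
    rcases eq_or_ne B C with h | h <;> simp [h] <;> ring
  rw [Finset.sum_congr rfl fun C _ => h C, Finset.sum_add_distrib]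
  congr 1
  · simp [ite_mul]
  · rw [← Finset.mul_sum]

theorem eulerEbar_coord_mul (hg : Sm g) :
    eulerEbar (fun y => y B * g y) x = x B * eulerEbar g x := by
  simp only [eulerEbar_unfold]
  rw [Finset.mul_sum]
  refine Finset.sum_congr rfl fun C _ => ?_
  rw [wderBar_coord_mul hg]; ring

theorem eulerE_conj_mul (hg : Sm g) :
    eulerE (fun y => (starRingEnd ℂ) (y A) * g y) x
      = (starRingEnd ℂ) (x A) * eulerE g x := by
  simp only [eulerE_unfold]
  rw [Finset.mul_sum]
  refine Finset.sum_congr rfl fun C _ => ?_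
  rw [wder_conj_mul hg]; ring

theorem eulerEbar_conj_mul (hg : Sm g) :
    eulerEbar (fun y => (starRingEnd ℂ) (y A) * g y) x
      = (starRingEnd ℂ) (x A) * g x + (starRingEnd ℂ) (x A) * eulerEbar g x := by
  simp only [eulerEbar_unfold]
  have h : ∀ C, (starRingEnd ℂ) (x C) * wderBar (fun y => (starRingEnd ℂ) (y A) * g y) C x
      = (if A = C then (1:ℂ) else 0) * ((starRingEnd ℂ) (x A) * g x)
        + (starRingEnd ℂ) (x A) * ((starRingEnd ℂ) (x C) * wderBar g C x) := by
    intro C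
    rw [wderBar_conj_mul hg]
    rcases eq_or_ne A C with h | h <;> simp [h] <;> ring
  rw [Finset.sum_congr rfl fun C _ => h C, Finset.sum_add_distrib]
  congr 1
  · simp [ite_mul]
  · rw [← Finset.mul_sum]

/-- homogeneity transfer: `E(∂_A f) = (p-1) ∂_A f`. -/
theorem eulerE_wder (hf : Sm f) (hp : ∀ y, eulerE f y = p * f y) (A : Fin N) (x : Fin N → ℂ) :
    eulerE (wder f A) x = (p - 1) * wder f A x := by
  have h0 : (fun y => ∑ C, y C * wder f C y) = fun y => p * f y :=
    funext fun y => hp y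
  have h1 : wder (fun y => ∑ C, y C * wder f C y) A x = wder (fun y => p * f y) A x := by
    rw [h0]
  rw [wder_sum (fun C => (Sm_coord C).mul (Sm_wder hf)), wder_const_mul hf] at h1
  have h2 : ∀ C, wder (fun y => y C * wder f C y) A x
      = (if C = A then (1:ℂ) else 0) * wder f C x + x C * wder (wder f A) C x := by
    intro C
    rw [wder_coord_mul (Sm_wder hf), wder_wder_comm hf]
  rw [Finset.sum_congr rfl fun C _ => h2 C, Finset.sum_add_distrib] at h1
  have h3 : ∑ C, (if C = A then (1:ℂ) else 0) * wder f C x = wder f A x := by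
    simp [ite_mul]
  rw [h3] at h1
  have h4 : ∑ C, x C * wder (wder f A) C x = eulerE (wder f A) x := rfl
  rw [h4] at h1
  linear_combination h1

/-- homogeneity transfer: `Ē(∂_A f) = q ∂_A f`. -/
theorem eulerEbar_wder (hf : Sm f) (hq : ∀ y, eulerEbar f y = q * f y) (A : Fin N)
    (x : Fin N → ℂ) : eulerEbar (wder f A) x = q * wder f A x := by
  have h0 : (fun y => ∑ C, (starRingEnd ℂ) (y C) * wderBar f C y) = fun y => q * f y :=
    funext fun y => hq y
  have h1 : wder (fun y => ∑ C, (starRingEnd ℂ) (y C) * wderBar f C y) A x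
      = wder (fun y => q * f y) A x := by rw [h0]
  rw [wder_sum (fun C => (Sm_coord_conj C).mul (Sm_wderBar hf)), wder_const_mul hf] at h1
  have h2 : ∀ C, wder (fun y => (starRingEnd ℂ) (y C) * wderBar f C y) A x
      = (starRingEnd ℂ) (x C) * wderBar (wder f A) C x := by
    intro C
    rw [wder_conj_mul (Sm_wderBar hf), wder_wderBar_comm hf]
  rw [Finset.sum_congr rfl fun C _ => h2 C] at h1
  exact h1

/-- homogeneity transfer: `E(∂_B̄ f) = p ∂_B̄ f`. -/
theorem eulerE_wderBar (hf : Sm f) (hp : ∀ y, eulerE f y = p * f y) (B : Fin N)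
    (x : Fin N → ℂ) : eulerE (wderBar f B) x = p * wderBar f B x := by
  have h0 : (fun y => ∑ C, y C * wder f C y) = fun y => p * f y :=
    funext fun y => hp y
  have h1 : wderBar (fun y => ∑ C, y C * wder f C y) B x
      = wderBar (fun y => p * f y) B x := by rw [h0]
  rw [wderBar_sum (fun C => (Sm_coord C).mul (Sm_wder hf)), wderBar_const_mul hf] at h1
  have h2 : ∀ C, wderBar (fun y => y C * wder f C y) B x
      = x C * wder (wderBar f B) C x := by
    intro C
    rw [wderBar_coord_mul (Sm_wder hf), ← wder_wderBar_comm hf]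
  rw [Finset.sum_congr rfl fun C _ => h2 C] at h1
  exact h1

/-- homogeneity transfer: `Ē(∂_B̄ f) = (q-1) ∂_B̄ f`. -/
theorem eulerEbar_wderBar (hf : Sm f) (hq : ∀ y, eulerEbar f y = q * f y) (B : Fin N)
    (x : Fin N → ℂ) : eulerEbar (wderBar f B) x = (q - 1) * wderBar f B x := by
  have h0 : (fun y => ∑ C, (starRingEnd ℂ) (y C) * wderBar f C y) = fun y => q * f y :=
    funext fun y => hq y
  have h1 : wderBar (fun y => ∑ C, (starRingEnd ℂ) (y C) * wderBar f C y) B x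
      = wderBar (fun y => q * f y) B x := by rw [h0]
  rw [wderBar_sum (fun C => (Sm_coord_conj C).mul (Sm_wderBar hf)),
    wderBar_const_mul hf] at h1
  have h2 : ∀ C, wderBar (fun y => (starRingEnd ℂ) (y C) * wderBar f C y) B x
      = (if C = B then (1:ℂ) else 0) * wderBar f C x
        + (starRingEnd ℂ) (x C) * wderBar (wderBar f B) C x := by
    intro C
    rw [wderBar_conj_mul (Sm_wderBar hf), wderBar_wderBar_comm hf]
  rw [Finset.sum_congr rfl fun C _ => h2 C, Finset.sum_add_distrib] at h1
  have h3 : ∑ C, (if C = B then (1:ℂ) else 0) * wderBar f C x = wderBar f B x := by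
    simp [ite_mul]
  rw [h3] at h1
  have h4 : ∑ C, (starRingEnd ℂ) (x C) * wderBar (wderBar f B) C x
      = eulerEbar (wderBar f B) x := rfl
  rw [h4] at h1
  linear_combination h1

theorem eulerE_lap (hf : Sm f) (hp : ∀ y, eulerE f y = p * f y) (x : Fin N → ℂ) :
    eulerE (ambLap ε f) x = (p - 1) * ambLap ε f x := by
  have h0 : ambLap ε f = fun y => ∑ C, (ε C : ℂ) * wder (wderBar f C) C y := rfl
  have hterm : ∀ C (y : Fin N → ℂ), eulerE (fun z => (ε C : ℂ) * wder (wderBar f C) C z) y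
      = (p - 1) * ((ε C : ℂ) * wder (wderBar f C) C y) := by
    intro C y
    rw [eulerE_const_mul (Sm_wder (Sm_wderBar hf)),
      eulerE_wder (Sm_wderBar hf) (fun z => eulerE_wderBar hf hp C z) C y]
    ring
  calc eulerE (ambLap ε f) x
      = ∑ C, eulerE (fun z => (ε C : ℂ) * wder (wderBar f C) C z) x := by
        rw [show eulerE (ambLap ε f) x
            = eulerE (fun y => ∑ C, (ε C : ℂ) * wder (wderBar f C) C y) x from rfl,
          eulerE_sum (fun C => contDiff_const.mul (Sm_wder (Sm_wderBar hf)))]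
    _ = (p - 1) * ambLap ε f x := by
        rw [Finset.sum_congr rfl fun C _ => hterm C x, ← Finset.mul_sum, ambLap_unfold]

theorem eulerEbar_lap (hf : Sm f) (hq : ∀ y, eulerEbar f y = q * f y) (x : Fin N → ℂ) :
    eulerEbar (ambLap ε f) x = (q - 1) * ambLap ε f x := by
  have hterm : ∀ C (y : Fin N → ℂ),
      eulerEbar (fun z => (ε C : ℂ) * wder (wderBar f C) C z) y
      = (q - 1) * ((ε C : ℂ) * wder (wderBar f C) C y) := by
    intro C y
    rw [eulerEbar_const_mul (Sm_wder (Sm_wderBar hf)),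
      eulerEbar_wder (Sm_wderBar hf) (fun z => eulerEbar_wderBar hf hq C z) C y]
    ring
  calc eulerEbar (ambLap ε f) x
      = ∑ C, eulerEbar (fun z => (ε C : ℂ) * wder (wderBar f C) C z) x := by
        rw [show eulerEbar (ambLap ε f) x
            = eulerEbar (fun y => ∑ C, (ε C : ℂ) * wder (wderBar f C) C y) x from rfl,
          eulerEbar_sum (fun C => contDiff_const.mul (Sm_wder (Sm_wderBar hf)))]
    _ = (q - 1) * ambLap ε f x := by
        rw [Finset.sum_congr rfl fun C _ => hterm C x, ← Finset.mul_sum, ambLap_unfold]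

end eulerRules

section DopRules

variable {ε : Fin N → ℝ} {f f1 f2 f3 f4 f5 : (Fin N → ℂ) → ℂ} {x : Fin N → ℂ}
  {c p q c1 c2 c3 c4 c5 : ℂ} {A B : Fin N}

theorem Dop_eq (hf : Sm f) (hp : ∀ y, eulerE f y = p * f y)
    (hq : ∀ y, eulerEbar f y = q * f y) (A : Fin N) (x : Fin N → ℂ) :
    Dop ε A f x = ((N : ℂ) - 2 + p + q) * wder f A x
      - (ε A : ℂ) * ((starRingEnd ℂ) (x A) * ambLap ε f x) := by
  show ((N : ℂ) - 1) * wder f A x + eulerE (fun y => wder f A y) x +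
      eulerEbar (fun y => wder f A y) x
      - (ε A : ℂ) * (starRingEnd ℂ) (x A) * ambLap ε f x = _
  rw [show (fun y => wder f A y) = wder f A from rfl, eulerE_wder hf hp A x,
    eulerEbar_wder hf hq A x]
  ring

theorem DopBar_eq (hf : Sm f) (hp : ∀ y, eulerE f y = p * f y)
    (hq : ∀ y, eulerEbar f y = q * f y) (B : Fin N) (x : Fin N → ℂ) :
    DopBar ε B f x = ((N : ℂ) - 2 + p + q) * wderBar f B x
      - (ε B : ℂ) * (x B * ambLap ε f x) := by
  show ((N : ℂ) - 1) * wderBar f B x + eulerE (fun y => wderBar f B y) x +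
      eulerEbar (fun y => wderBar f B y) x
      - (ε B : ℂ) * x B * ambLap ε f x = _
  rw [show (fun y => wderBar f B y) = wderBar f B from rfl, eulerE_wderBar hf hp B x,
    eulerEbar_wderBar hf hq B x]
  ring

theorem wder_comb2 (h1 : Sm f1) (h2 : Sm f2) :
    wder (fun y => c1 * f1 y - c2 * f2 y) A x = c1 * wder f1 A x - c2 * wder f2 A x := by
  rw [wder_sub (contDiff_const.mul h1) (contDiff_const.mul h2),
    wder_const_mul h1, wder_const_mul h2]

theorem lap_comb2 (h1 : Sm f1) (h2 : Sm f2) :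
    ambLap ε (fun y => c1 * f1 y - c2 * f2 y) x
      = c1 * ambLap ε f1 x - c2 * ambLap ε f2 x := by
  rw [lap_sub (contDiff_const.mul h1) (contDiff_const.mul h2),
    lap_const_mul h1, lap_const_mul h2]

theorem eulerE_comb2 (h1 : Sm f1) (h2 : Sm f2) :
    eulerE (fun y => c1 * f1 y - c2 * f2 y) x
      = c1 * eulerE f1 x - c2 * eulerE f2 x := by
  rw [eulerE_sub (contDiff_const.mul h1) (contDiff_const.mul h2),
    eulerE_const_mul h1, eulerE_const_mul h2]

theorem eulerEbar_comb2 (h1 : Sm f1) (h2 : Sm f2) :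
    eulerEbar (fun y => c1 * f1 y - c2 * f2 y) x
      = c1 * eulerEbar f1 x - c2 * eulerEbar f2 x := by
  rw [eulerEbar_sub (contDiff_const.mul h1) (contDiff_const.mul h2),
    eulerEbar_const_mul h1, eulerEbar_const_mul h2]

theorem lap_comb5 (h1 : Sm f1) (h2 : Sm f2) (h3 : Sm f3) (h4 : Sm f4) (h5 : Sm f5) :
    ambLap ε (fun y => c1 * f1 y - c2 * f2 y - c3 * f3 y - c4 * f4 y + c5 * f5 y) x
      = c1 * ambLap ε f1 x - c2 * ambLap ε f2 x - c3 * ambLap ε f3 x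
        - c4 * ambLap ε f4 x + c5 * ambLap ε f5 x := by
  have s1 : Sm (fun y => c1 * f1 y) := contDiff_const.mul h1
  have s2 : Sm (fun y => c2 * f2 y) := contDiff_const.mul h2
  have s3 : Sm (fun y => c3 * f3 y) := contDiff_const.mul h3
  have s4 : Sm (fun y => c4 * f4 y) := contDiff_const.mul h4
  have s5 : Sm (fun y => c5 * f5 y) := contDiff_const.mul h5
  rw [lap_add (((s1.sub s2).sub s3).sub s4) s5,
    lap_sub ((s1.sub s2).sub s3) s4, lap_sub (s1.sub s2) s3, lap_sub s1 s2,
    lap_const_mul h1, lap_const_mul h2, lap_const_mul h3, lap_const_mul h4,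
    lap_const_mul h5]

end DopRules

end CRaux

open CRaux in
/-- The flat, curvature-free case of the identity `Δ^k D_A D_{B̄} = Z_A Z_{B̄} Δ^{k+2}`
(Corollary 6.3 / Theorem 6.5 of the paper) on densities of bidegree
`((k+3−N)/2, (k+3−N)/2)`, the key step expressing the CR GJMS operators through
tractor-D operators. -/
theorem lap_pow_DA_DBbar (N : ℕ) (hN : 3 ≤ N) (ε : Fin N → ℝ)
    (hε : ∀ A, ε A = 1 ∨ ε A = -1) (k : ℕ)
    (f : (Fin N → ℂ) → ℂ) (hf : ContDiff ℝ (⊤ : ℕ∞) f)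
    (hE : ∀ x : Fin N → ℂ, eulerE f x = (((k : ℂ) + 3 - N) / 2) * f x)
    (hEbar : ∀ x : Fin N → ℂ, eulerEbar f x = (((k : ℂ) + 3 - N) / 2) * f x)
    (A B : Fin N) (x : Fin N → ℂ) :
    (ambLap ε)^[k] (fun y => Dop ε A (fun z => DopBar ε B f z) y) x =
      (ε A : ℂ) * (ε B : ℂ) * (starRingEnd ℂ) (x A) * x B * (ambLap ε)^[k + 2] f x := by
  classical
  have hf' : Sm f := hf
  set w : ℂ := (((k : ℂ) + 3 - N) / 2) with hw
  have hB2 : (ε B : ℂ) * (ε B : ℂ) = 1 := by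
    rcases hε B with h | h <;> rw [h] <;> norm_num
  -- G := DopBar ε B f in closed form
  set G : (Fin N → ℂ) → ℂ :=
    fun y => ((k : ℂ) + 1) * wderBar f B y - (ε B : ℂ) * (y B * ambLap ε f y) with hGdef
  have hSmLap : Sm (ambLap ε f) := Sm_ambLap hf'
  have hSmf2 : Sm (fun y => y B * ambLap ε f y) := (Sm_coord B).mul hSmLap
  have hSmG : Sm G := (contDiff_const.mul (Sm_wderBar hf')).sub (contDiff_const.mul hSmf2)
  have hDopBar : DopBar ε B f = G := by
    funext y
    rw [DopBar_eq hf' hE hEbar B y, hGdef]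
    have hco : (N : ℂ) - 2 + w + w = (k : ℂ) + 1 := by rw [hw]; ring
    rw [hco]
  -- homogeneity of G
  have hGE : ∀ y, eulerE G y = w * G y := by
    intro y
    rw [hGdef, eulerE_comb2 (Sm_wderBar hf') hSmf2, eulerE_wderBar hf' hE B y,
      eulerE_coord_mul hSmLap, eulerE_lap hf' hE y]
    ring
  have hGEbar : ∀ y, eulerEbar G y = (w - 1) * G y := by
    intro y
    rw [hGdef, eulerEbar_comb2 (Sm_wderBar hf') hSmf2, eulerEbar_wderBar hf' hEbar B y,
      eulerEbar_coord_mul hSmLap, eulerEbar_lap hf' hEbar y]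
    ring
  -- Dop applied to G
  have hDopG : ∀ y, Dop ε A G y = (k : ℂ) * wder G A y
      - (ε A : ℂ) * ((starRingEnd ℂ) (y A) * ambLap ε G y) := by
    intro y
    rw [Dop_eq hSmG hGE hGEbar A y]
    have hco : (N : ℂ) - 2 + w + (w - 1) = (k : ℂ) := by rw [hw]; ring
    rw [hco]
  have hwderG : ∀ y, wder G A y = ((k : ℂ) + 1) * wder (wderBar f B) A y
      - (ε B : ℂ) * ((if B = A then (1:ℂ) else 0) * ambLap ε f y
        + y B * wder (ambLap ε f) A y) := by
    intro y
    rw [hGdef, wder_comb2 (Sm_wderBar hf') hSmf2, wder_coord_mul hSmLap]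
  have hlapG : ∀ y, ambLap ε G y = (k : ℂ) * wderBar (ambLap ε f) B y
      - (ε B : ℂ) * (y B * ambLap ε (ambLap ε f) y) := by
    intro y
    rw [hGdef, lap_comb2 (Sm_wderBar hf') hSmf2, lap_coord_mul hSmLap,
      ← wderBar_lap hf']
    linear_combination (-(wderBar (ambLap ε f) B y)) * hB2
  -- the iterates
  set u : ℕ → (Fin N → ℂ) → ℂ := fun j => (ambLap ε)^[j] f with hu
  have husm : ∀ j, Sm (u j) := by
    intro j
    induction j with
    | zero => exact hf'
    | succ n ih =>
        have : u (n + 1) = ambLap ε (u n) := Function.iterate_succ_apply' (ambLap ε) n f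
        rw [this]
        exact Sm_ambLap ih
  have husucc : ∀ j, u (j + 1) = ambLap ε (u j) :=
    fun j => Function.iterate_succ_apply' (ambLap ε) j f
  -- main induction
  have claim : ∀ j, j ≤ k → ∀ y, (ambLap ε)^[j] (Dop ε A G) y =
      ((k : ℂ) - j) * (((k : ℂ) - j) + 1) * wder (wderBar (u j) B) A y
      - ((k : ℂ) - j) * (if A = B then (ε B : ℂ) else 0) * u (j + 1) y
      - ((k : ℂ) - j) * (ε B : ℂ) * (y B * wder (u (j + 1)) A y)
      - ((k : ℂ) - j) * (ε A : ℂ) * ((starRingEnd ℂ) (y A) * wderBar (u (j + 1)) B y)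
      + (ε A : ℂ) * (ε B : ℂ) * ((starRingEnd ℂ) (y A) * (y B * u (j + 2) y)) := by
    intro j
    induction j with
    | zero =>
        intro _ y
        simp only [Function.iterate_zero, id_eq]
        rw [hDopG y, hwderG y, hlapG y]
        have h0 : u 0 = f := rfl
        have h1 : u 1 = ambLap ε f := by rw [husucc 0, h0]
        have h2 : u 2 = ambLap ε (ambLap ε f) := by rw [husucc 1, h1]
        rw [h0, h1, h2]
        push_cast
        by_cases hab : A = B
        · subst hab
          rw [if_pos rfl, if_pos rfl]
          ring
        · rw [if_neg hab, if_neg fun h => hab h.symm]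
          ring
    | succ n ih =>
        intro hn y
        have hn' : n ≤ k := Nat.le_of_succ_le hn
        rw [Function.iterate_succ_apply']
        have hfun : (ambLap ε)^[n] (Dop ε A G) = fun z =>
            ((k : ℂ) - n) * (((k : ℂ) - n) + 1) * wder (wderBar (u n) B) A z
            - ((k : ℂ) - n) * (if A = B then (ε B : ℂ) else 0) * u (n + 1) z
            - ((k : ℂ) - n) * (ε B : ℂ) * (z B * wder (u (n + 1)) A z)
            - ((k : ℂ) - n) * (ε A : ℂ)
                * ((starRingEnd ℂ) (z A) * wderBar (u (n + 1)) B z)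
            + (ε A : ℂ) * (ε B : ℂ) * ((starRingEnd ℂ) (z A) * (z B * u (n + 2) z)) :=
          funext (ih hn')
        rw [hfun,
          lap_comb5 (Sm_wder (Sm_wderBar (husm n))) (husm (n + 1))
            ((Sm_coord B).mul (Sm_wder (husm (n + 1))))
            ((Sm_coord_conj A).mul (Sm_wderBar (husm (n + 1))))
            ((Sm_coord_conj A).mul ((Sm_coord B).mul (husm (n + 2))))]
        -- rewrite each Laplacian term
        have e0 : ambLap ε (wderBar (u n) B) = wderBar (u (n + 1)) B := by
          funext z
          rw [husucc n]
          exact (wderBar_lap (husm n)).symm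
        have e1 : ambLap ε (wder (wderBar (u n) B) A) y
            = wder (wderBar (u (n + 1)) B) A y := by
          rw [← wder_lap (Sm_wderBar (husm n)), e0]
        have e2 : ambLap ε (u (n + 1)) y = u (n + 2) y := by rw [← husucc (n + 1)]
        have e2' : ambLap ε (u (n + 2)) y = u (n + 3) y := by rw [← husucc (n + 2)]
        have ewd : ambLap ε (wder (u (n + 1)) A) y = wder (u (n + 2)) A y := by
          rw [← wder_lap (husm (n + 1)), ← husucc (n + 1)]
        have ewdb : ambLap ε (wderBar (u (n + 1)) B) y = wderBar (u (n + 2)) B y := by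
          rw [← wderBar_lap (husm (n + 1)), ← husucc (n + 1)]
        have e3 : ambLap ε (fun z => z B * wder (u (n + 1)) A z) y
            = (ε B : ℂ) * wder (wderBar (u (n + 1)) B) A y
              + y B * wder (u (n + 2)) A y := by
          rw [lap_coord_mul (Sm_wder (husm (n + 1))), ewd,
            wder_wderBar_comm (husm (n + 1))]
        have e4 : ambLap ε (fun z => (starRingEnd ℂ) (z A) * wderBar (u (n + 1)) B z) y
            = (ε A : ℂ) * wder (wderBar (u (n + 1)) B) A y
              + (starRingEnd ℂ) (y A) * wderBar (u (n + 2)) B y := by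
          rw [lap_conj_mul (Sm_wderBar (husm (n + 1))), ewdb]
        have e5 : ambLap ε (fun z => (starRingEnd ℂ) (z A) * (z B * u (n + 2) z)) y
            = (ε A : ℂ) * ((if B = A then (1:ℂ) else 0) * u (n + 2) y
                + y B * wder (u (n + 2)) A y)
              + (starRingEnd ℂ) (y A) * ((ε B : ℂ) * wderBar (u (n + 2)) B y
                + y B * u (n + 3) y) := by
          rw [lap_conj_mul ((Sm_coord B).mul (husm (n + 2))), wder_coord_mul (husm (n + 2)),
            lap_coord_mul (husm (n + 2)), e2']
        rw [e1, e2, e3, e4, e5]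
        push_cast
        by_cases hab : A = B
        · subst hab
          rw [if_pos rfl, if_pos rfl]
          rcases hε A with hA | hA <;> rw [hA] <;> push_cast <;> ring
        · rw [if_neg hab, if_neg fun h => hab h.symm]
          rcases hε A with hA | hA <;> rcases hε B with hB | hB <;>
            rw [hA, hB] <;> push_cast <;> ring
  -- conclusion
  have houter : (fun y => Dop ε A (fun z => DopBar ε B f z) y) = Dop ε A G := by
    rw [show (fun z => DopBar ε B f z) = G from hDopBar]
  rw [houter, claim k (le_refl k) x]
  rw [show ((k : ℂ) - (k : ℕ)) = 0 from sub_self _]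
  rw [show u (k + 2) x = (ambLap ε)^[k + 2] f x from rfl]
  ring
end
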